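/- Let ε > 0 and ν ∈ ℝ³. Let Φ : ℝ⁴ → ℝ be twice continuously differentiable near a point p ∈ ℝ⁴ with ∂₁Φ(p) ≠ 0, and let h, e : ℝ⁴ → ℝ³ be differentiable near p. Set N = (1, −∂₂Φ, −∂₃Φ). Assume that at the point p one has ε∂ₜ^Φ h + ∇^Φ × e + ε(∇^Φ · h)ν = 0 and ∂ₜΦ(p) = ⟨ν, N(p)⟩. Then ε∂ₜ⟨h, N⟩ + ∂₂(e₃ + (∂₃Φ)e₁ + ε(∂ₜΦ)h₂) − ∂₃(e₂ + (∂₂Φ)e₁ − ε(∂ₜΦ)h₃) = 0 at p. -/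

import Mathlib

open Filter Topology

/-- Partial derivative `∂ᵢ f` on `ℝ⁴` (coordinates `(t, x₁, x₂, x₃)` indexed by `Fin 4`,
with `∂₀ = ∂ₜ`). -/
noncomputable def pd (i : Fin 4) (f : (Fin 4 → ℝ) → ℝ) (x : Fin 4 → ℝ) : ℝ :=
  fderiv ℝ f x (Pi.single i 1)

/-- Transformed derivative `∂ᵢ^Φ`: `∂ₜ^Φ f = ∂ₜf − (∂ₜΦ/∂₁Φ)∂₁f`,
`∂₁^Φ f = ∂₁f/∂₁Φ`, and `∂ⱼ^Φ f = ∂ⱼf − (∂ⱼΦ/∂₁Φ)∂₁f` for `j = 2, 3`. -/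
noncomputable def pdPhi (Φ : (Fin 4 → ℝ) → ℝ) (i : Fin 4) (f : (Fin 4 → ℝ) → ℝ)
    (x : Fin 4 → ℝ) : ℝ :=
  if i = 1 then pd 1 f x / pd 1 Φ x else pd i f x - pd i Φ x / pd 1 Φ x * pd 1 f x

/-- Transformed divergence `∇^Φ · u = ∂₁^Φu₁ + ∂₂^Φu₂ + ∂₃^Φu₃`. -/
noncomputable def divPhi (Φ : (Fin 4 → ℝ) → ℝ) (u : (Fin 4 → ℝ) → Fin 3 → ℝ)
    (x : Fin 4 → ℝ) : ℝ :=
  pdPhi Φ 1 (fun y => u y 0) x + pdPhi Φ 2 (fun y => u y 1) x + pdPhi Φ 3 (fun y => u y 2) x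

/-- Transformed curl
`∇^Φ × u = (∂₂^Φu₃ − ∂₃^Φu₂, ∂₃^Φu₁ − ∂₁^Φu₃, ∂₁^Φu₂ − ∂₂^Φu₁)`. -/
noncomputable def curlPhi (Φ : (Fin 4 → ℝ) → ℝ) (u : (Fin 4 → ℝ) → Fin 3 → ℝ)
    (x : Fin 4 → ℝ) : Fin 3 → ℝ :=
  ![pdPhi Φ 2 (fun y => u y 2) x - pdPhi Φ 3 (fun y => u y 1) x,
    pdPhi Φ 3 (fun y => u y 0) x - pdPhi Φ 1 (fun y => u y 2) x,
    pdPhi Φ 1 (fun y => u y 1) x - pdPhi Φ 2 (fun y => u y 0) x]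

/-- If at a point `p` the reduced vacuum Maxwell equation
`ε∂ₜ^Φ h + ∇^Φ × e + ε(∇^Φ · h)ν = 0` holds and `∂ₜΦ = ⟨ν, N⟩` with
`N = (1, −∂₂Φ, −∂₃Φ)`, then
`ε∂ₜ⟨h, N⟩ + ∂₂(e₃ + (∂₃Φ)e₁ + ε(∂ₜΦ)h₂) − ∂₃(e₂ + (∂₂Φ)e₁ − ε(∂ₜΦ)h₃) = 0` at `p`. -/
theorem stmt_11 (ε : ℝ) (hε : 0 < ε) (ν : Fin 3 → ℝ)
    (Φ : (Fin 4 → ℝ) → ℝ) (h e : (Fin 4 → ℝ) → Fin 3 → ℝ) (p : Fin 4 → ℝ)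
    (hΦ : ContDiffAt ℝ 2 Φ p) (hΦ1 : pd 1 Φ p ≠ 0)
    (hh : ∀ᶠ x in 𝓝 p, DifferentiableAt ℝ h x)
    (he : ∀ᶠ x in 𝓝 p, DifferentiableAt ℝ e x)
    (heq : ∀ i : Fin 3,
      ε * pdPhi Φ 0 (fun x => h x i) p + curlPhi Φ e p i + ε * divPhi Φ h p * ν i = 0)
    (hbc : pd 0 Φ p = ν 0 - ν 1 * pd 2 Φ p - ν 2 * pd 3 Φ p) :
    ε * pd 0 (fun x => h x 0 - pd 2 Φ x * h x 1 - pd 3 Φ x * h x 2) p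
      + pd 2 (fun x => e x 2 + pd 3 Φ x * e x 0 + ε * pd 0 Φ x * h x 1) p
      - pd 3 (fun x => e x 1 + pd 2 Φ x * e x 0 - ε * pd 0 Φ x * h x 2) p = 0 := by
  have hdh : ∀ j : Fin 3, DifferentiableAt ℝ (fun x => h x j) p := fun j =>
    differentiableAt_pi.1 hh.self_of_nhds j
  have hde : ∀ j : Fin 3, DifferentiableAt ℝ (fun x => e x j) p := fun j =>
    differentiableAt_pi.1 he.self_of_nhds j
  have hΦd : DifferentiableAt ℝ (fderiv ℝ Φ) p :=
    (hΦ.fderiv_right (m := 1) (by norm_num)).differentiableAt one_ne_zero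
  have hpdΦ : ∀ i : Fin 4, DifferentiableAt ℝ (fun x => fderiv ℝ Φ x (Pi.single i 1)) p :=
    fun i => hΦd.clm_apply (differentiableAt_const _)
  have hfd2 : ∀ i j : Fin 4, fderiv ℝ (fun x => fderiv ℝ Φ x (Pi.single j 1)) p (Pi.single i 1)
      = fderiv ℝ (fderiv ℝ Φ) p (Pi.single i 1) (Pi.single j 1) := by
    intro i j
    rw [fderiv_clm_apply hΦd (differentiableAt_const _)]
    simp
  have hsym : ∀ i j : Fin 4,
      fderiv ℝ (fun x => fderiv ℝ Φ x (Pi.single j 1)) p (Pi.single i 1)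
        = fderiv ℝ (fun x => fderiv ℝ Φ x (Pi.single i 1)) p (Pi.single j 1) := by
    intro i j
    rw [hfd2, hfd2]
    exact hΦ.isSymmSndFDerivAt (by simp) _ _
  have E0 := heq 0
  have E1 := heq 1
  have E2 := heq 2
  simp only [pdPhi, curlPhi, divPhi, pd, Matrix.cons_val_zero, Matrix.cons_val_one,
    Matrix.head_cons, Matrix.cons_val_two, Matrix.tail_cons, if_true, if_false,
    show (0 : Fin 4) ≠ 1 by decide, show (2 : Fin 4) ≠ 1 by decide,
    show (3 : Fin 4) ≠ 1 by decide] at E0 E1 E2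
  simp only [pd] at hbc
  -- expand the goal derivatives
  have K1 : HasFDerivAt
      (fun x => h x 0 - fderiv ℝ Φ x (Pi.single 2 1) * h x 1
        - fderiv ℝ Φ x (Pi.single 3 1) * h x 2)
      ((fderiv ℝ (fun x => h x 0) p
        - (fderiv ℝ Φ p (Pi.single 2 1) • fderiv ℝ (fun x => h x 1) p
          + h p 1 • fderiv ℝ (fun x => fderiv ℝ Φ x (Pi.single 2 1)) p))
        - (fderiv ℝ Φ p (Pi.single 3 1) • fderiv ℝ (fun x => h x 2) p
          + h p 2 • fderiv ℝ (fun x => fderiv ℝ Φ x (Pi.single 3 1)) p)) p :=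
    ((hdh 0).hasFDerivAt.sub ((hpdΦ 2).hasFDerivAt.mul (hdh 1).hasFDerivAt)).sub
      ((hpdΦ 3).hasFDerivAt.mul (hdh 2).hasFDerivAt)
  have K2 : HasFDerivAt
      (fun x => e x 2 + fderiv ℝ Φ x (Pi.single 3 1) * e x 0
        + ε * fderiv ℝ Φ x (Pi.single 0 1) * h x 1)
      ((fderiv ℝ (fun x => e x 2) p
        + (fderiv ℝ Φ p (Pi.single 3 1) • fderiv ℝ (fun x => e x 0) p
          + e p 0 • fderiv ℝ (fun x => fderiv ℝ Φ x (Pi.single 3 1)) p))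
        + ((ε * fderiv ℝ Φ p (Pi.single 0 1)) • fderiv ℝ (fun x => h x 1) p
          + h p 1 • (ε • fderiv ℝ (fun x => fderiv ℝ Φ x (Pi.single 0 1)) p))) p :=
    ((hde 2).hasFDerivAt.add ((hpdΦ 3).hasFDerivAt.mul (hde 0).hasFDerivAt)).add
      (((hpdΦ 0).hasFDerivAt.const_mul ε).mul (hdh 1).hasFDerivAt)
  have K3 : HasFDerivAt
      (fun x => e x 1 + fderiv ℝ Φ x (Pi.single 2 1) * e x 0
        - ε * fderiv ℝ Φ x (Pi.single 0 1) * h x 2)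
      ((fderiv ℝ (fun x => e x 1) p
        + (fderiv ℝ Φ p (Pi.single 2 1) • fderiv ℝ (fun x => e x 0) p
          + e p 0 • fderiv ℝ (fun x => fderiv ℝ Φ x (Pi.single 2 1)) p))
        - ((ε * fderiv ℝ Φ p (Pi.single 0 1)) • fderiv ℝ (fun x => h x 2) p
          + h p 2 • (ε • fderiv ℝ (fun x => fderiv ℝ Φ x (Pi.single 0 1)) p))) p :=
    ((hde 1).hasFDerivAt.add ((hpdΦ 2).hasFDerivAt.mul (hde 0).hasFDerivAt)).sub
      (((hpdΦ 0).hasFDerivAt.const_mul ε).mul (hdh 2).hasFDerivAt)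
  simp only [pd]
  rw [K1.fderiv, K2.fderiv, K3.fderiv]
  simp only [ContinuousLinearMap.sub_apply, ContinuousLinearMap.add_apply,
    ContinuousLinearMap.smul_apply, smul_eq_mul]
  linear_combination E0 - fderiv ℝ Φ p (Pi.single 2 1) * E1
    - fderiv ℝ Φ p (Pi.single 3 1) * E2
    + ε * h p 1 * hsym 2 0 + ε * h p 2 * hsym 3 0 + e p 0 * hsym 2 3
    + ε * (fderiv ℝ (fun x => h x 0) p (Pi.single 1 1) / fderiv ℝ Φ p (Pi.single 1 1)
        + (fderiv ℝ (fun x => h x 1) p (Pi.single 2 1)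
          - fderiv ℝ Φ p (Pi.single 2 1) / fderiv ℝ Φ p (Pi.single 1 1)
            * fderiv ℝ (fun x => h x 1) p (Pi.single 1 1))
        + (fderiv ℝ (fun x => h x 2) p (Pi.single 3 1)
          - fderiv ℝ Φ p (Pi.single 3 1) / fderiv ℝ Φ p (Pi.single 1 1)
            * fderiv ℝ (fun x => h x 2) p (Pi.single 1 1))) * hbc
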